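/- A partial type p(x) has dp-rank ≤ n if and only if every formula φ(x;y) has local dp-rank ≤ n with respect to p. (Proposition 2.3) -/

import Mathlib

open FirstOrder FirstOrder.Language

namespace VCPaper

variable {L : Language}

/-- `a` realizes the partial type `p(x)`. -/
def RealizesType {M : Type*} [L.Structure M] {α : Type*}
    (p : Set (L.Formula α)) (a : α → M) : Prop :=
  ∀ ψ ∈ p, ψ.Realize a

/-- The family `b` (of `β`-tuples), indexed by a linear order `I`, is an
indiscernible sequence: any two strictly increasing tuples of indices of the
same length satisfy the same formulas. -/
def IsIndiscernible (L : Language) {M : Type*} [L.Structure M] {β : Type*} {I : Type*}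
    [LinearOrder I] (b : I → β → M) : Prop :=
  ∀ (n : ℕ) (ψ : L.Formula (Fin n × β)) (i j : Fin n → I), StrictMono i → StrictMono j →
    (ψ.Realize (fun v => b (i v.1) v.2) ↔ ψ.Realize (fun v => b (j v.1) v.2))

/-- `S_φ(B) ∩ [p]` for the finite sequence `b = ⟨b_i : i < N⟩`: the set of
`φ`-types over the terms of the sequence consistent with `p` (in the monster
model, consistent = realized). -/
def SeqPhiTypes {M : Type*} [L.Structure M] {α β : Type*} (φ : L.Formula (α ⊕ β))
    (p : Set (L.Formula α)) {N : ℕ} (b : Fin N → β → M) : Set (Fin N → Bool) :=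
  { q | ∃ a : α → M, RealizesType p a ∧ ∀ i, (q i = true ↔ φ.Realize (Sum.elim a (b i))) }

/-- `φ(x;y)` has VC_ind-density `≤ ℓ` with respect to `p`. -/
def VCIndDensityLE (M : Type*) [L.Structure M] {α β : Type*} (φ : L.Formula (α ⊕ β))
    (p : Set (L.Formula α)) (ℓ : ℝ) : Prop :=
  ∃ K : ℝ, ∀ N : ℕ, 0 < N → ∀ b : Fin N → β → M, IsIndiscernible L b →
    ((SeqPhiTypes φ p b).ncard : ℝ) ≤ K * (N : ℝ) ^ ℓ

/-- `i ∼_C j` for `i, j ∈ ℚ` and `C ⊆ ℝ` (`ℝ` being the completion of `ℚ`). -/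
def SimRel (C : Set ℝ) (i j : ℚ) : Prop :=
  ∀ c ∈ C, ((c ≤ (i : ℝ)) ↔ (c ≤ (j : ℝ))) ∧ (((i : ℝ) ≤ c) ↔ ((j : ℝ) ≤ c))

/-- `φ(x;y)` has local dp-rank `≤ n` with respect to `p`. -/
def LocalDpRankLE (M : Type*) [L.Structure M] {α β : Type*} (φ : L.Formula (α ⊕ β))
    (p : Set (L.Formula α)) (n : ℕ) : Prop :=
  ∀ a : α → M, RealizesType p a → ∀ b : ℚ → β → M, IsIndiscernible L b →
    ∃ C : Finset ℝ, C.card ≤ n ∧ ∀ i j : ℚ, SimRel (↑C) i j →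
      (φ.Realize (Sum.elim a (b i)) ↔ φ.Realize (Sum.elim a (b j)))

/-- The partial type `p(x)` has dp-rank `≤ n`. -/
def DpRankLE (M : Type*) [L.Structure M] {α : Type*}
    (p : Set (L.Formula α)) (n : ℕ) : Prop :=
  ∀ a : α → M, RealizesType p a → ∀ (γ : Type) (b : ℚ → γ → M), IsIndiscernible L b →
    ∃ C : Finset ℝ, C.card ≤ n ∧ ∀ i j : ℚ, SimRel (↑C) i j →
      ∀ ψ : L.Formula (γ ⊕ α),
        (ψ.Realize (Sum.elim (b i) a) ↔ ψ.Realize (Sum.elim (b j) a))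

/-- `φ(x;y)` has UDTFS_ind-rank `≤ n` with respect to `p`. -/
def UDTFSIndRankLE (M : Type*) [L.Structure M] {α β : Type*} (φ : L.Formula (α ⊕ β))
    (p : Set (L.Formula α)) (n : ℕ) : Prop :=
  ∃ (ℓ k R : ℕ)
    (ψ : Fin R → L.Formula (β ⊕ ((Fin n × Fin (ℓ + 1)) ⊕ Fin k) × β)),
    ∀ N : ℕ, 0 < N → ∀ b : Fin N → β → M, IsIndiscernible L b →
      ∃ jj : Fin k → Fin N, ∀ q ∈ SeqPhiTypes φ p b,
        ∃ (r : Fin R) (ii : Fin n → ℕ) (g : (Fin n × Fin (ℓ + 1)) ⊕ Fin k → Fin N),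
          (∀ m, ii m < N) ∧
          (∀ (m : Fin n) (t : Fin (ℓ + 1)), ii m + (t : ℕ) < N →
            ((g (Sum.inl (m, t)) : ℕ) = ii m + (t : ℕ))) ∧
          (∀ s, g (Sum.inr s) = jj s) ∧
          ∀ i : Fin N,
            ((ψ r).Realize (Sum.elim (b i) (fun v => b (g v.1) v.2)) ↔ q i = true)

/-- `S_φ(B) ∩ [p]` for an arbitrary set `B` of `β`-tuples. -/
def SetPhiTypes (M : Type*) [L.Structure M] {α β : Type*} (φ : L.Formula (α ⊕ β))
    (p : Set (L.Formula α)) (B : Set (β → M)) : Set ((β → M) → Bool) :=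
  { q | (∀ c ∉ B, q c = false) ∧
        ∃ a : α → M, RealizesType p a ∧ ∀ c ∈ B, (q c = true ↔ φ.Realize (Sum.elim a c)) }

/-- `φ(x;y)` has VC-density `≤ ℓ` with respect to `p`. -/
def VCDensityLE (M : Type*) [L.Structure M] {α β : Type*} (φ : L.Formula (α ⊕ β))
    (p : Set (L.Formula α)) (ℓ : ℝ) : Prop :=
  ∃ K : ℝ, ∀ B : Set (β → M), B.Finite → B.Nonempty →
    ((SetPhiTypes M φ p B).ncard : ℝ) ≤ K * (B.ncard : ℝ) ^ ℓ

/-- `φ(x;y)` has UDTFS-rank `≤ n` with respect to `p`. -/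
def UDTFSRankLE (M : Type*) [L.Structure M] {α β : Type*} (φ : L.Formula (α ⊕ β))
    (p : Set (L.Formula α)) (n : ℕ) : Prop :=
  ∃ (R : ℕ) (ψ : Fin R → L.Formula (β ⊕ Fin n × β)),
    ∀ B : Set (β → M), B.Finite → B.Nonempty →
      ∀ q ∈ SetPhiTypes M φ p B,
        ∃ (r : Fin R) (f : Fin n → β → M), (∀ m, f m ∈ B) ∧
          ∀ c ∈ B, ((ψ r).Realize (Sum.elim c (fun v => f v.1 v.2)) ↔ q c = true)



/-! ### Auxiliary machinery -/

section Aux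

/-- `C` captures the boolean trace `F`. -/
def Captures (C : Set ℝ) (F : ℚ → Prop) : Prop :=
  ∀ i j : ℚ, SimRel C i j → (F i ↔ F j)

/-- The set of cut points of a boolean trace on `ℚ`. -/
def CutsP (F : ℚ → Prop) : Set ℝ :=
  {c | ∀ ε : ℝ, 0 < ε → ∃ i j : ℚ, c - ε < (i:ℝ) ∧ (i:ℝ) < c + ε ∧ c - ε < (j:ℝ) ∧
    (j:ℝ) < c + ε ∧ ¬(F i ↔ F j)}

lemma simRel_symm {C : Set ℝ} {i j : ℚ} (h : SimRel C i j) : SimRel C j i :=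
  fun c hc => ⟨(h c hc).1.symm, (h c hc).2.symm⟩

lemma captures_mono {C C' : Set ℝ} (h : C ⊆ C') {F : ℚ → Prop} (hC : Captures C F) :
    Captures C' F :=
  fun i j hs => hC i j (fun c hc => hs c (h hc))

lemma exists_pos_le_finset (s : Finset ℝ) (h : ∀ x ∈ s, 0 < x) :
    ∃ ε : ℝ, 0 < ε ∧ ∀ x ∈ s, ε ≤ x := by
  rcases s.eq_empty_or_nonempty with rfl | hs
  · exact ⟨1, one_pos, by simp⟩
  · exact ⟨s.min' hs, h _ (s.min'_mem hs), fun x hx => s.min'_le x hx⟩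

lemma cutsP_subset_of_captures {F : ℚ → Prop} (C : Finset ℝ) (hC : Captures ↑C F) :
    CutsP F ⊆ ↑C := by
  intro c hc
  by_contra hcC
  obtain ⟨ε, hε, hεle⟩ := exists_pos_le_finset (C.image (fun x => |x - c|)) (by
    intro y hy
    simp only [Finset.mem_image] at hy
    obtain ⟨x, hx, rfl⟩ := hy
    have : x ≠ c := by rintro rfl; exact hcC hx
    exact abs_pos.mpr (sub_ne_zero.mpr this))
  obtain ⟨i, j, h1, h2, h3, h4, h5⟩ := hc ε hε
  apply h5
  apply hC i j
  intro x hx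
  have hdist : ε ≤ |x - c| := hεle _ (Finset.mem_image_of_mem _ hx)
  rcases le_abs.mp hdist with hd | hd
  · constructor
    · constructor <;> intro h <;> linarith
    · constructor <;> intro h <;> linarith
  · constructor
    · constructor <;> intro h <;> linarith
    · constructor <;> intro h <;> linarith

lemma captures_cutsP (F : ℚ → Prop) : Captures (CutsP F) F := by
  have key : ∀ i j : ℚ, i < j → SimRel (CutsP F) i j → ¬(F i ↔ F j) → False := by
    intro i j hij hs hne
    set S : Set ℝ := {x | ∃ q : ℚ, (q:ℝ) = x ∧ i ≤ q ∧ q ≤ j ∧ ¬(F q ↔ F i)} with hS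
    have hj : (j:ℝ) ∈ S := ⟨j, rfl, le_of_lt hij, le_rfl, fun h => hne h.symm⟩
    have hbdd : BddBelow S := by
      refine ⟨(i:ℝ), ?_⟩
      rintro x ⟨q, rfl, hq1, _, _⟩
      exact_mod_cast hq1
    set c := sInf S with hcdef
    have hci : (i:ℝ) ≤ c := le_csInf ⟨_, hj⟩ (by rintro x ⟨q, rfl, hq1, _, _⟩; exact_mod_cast hq1)
    have hcj : c ≤ (j:ℝ) := csInf_le hbdd hj
    have hcut : c ∈ CutsP F := by
      intro ε hε
      obtain ⟨x, hxS, hxlt⟩ := exists_lt_of_csInf_lt ⟨_, hj⟩ (by linarith : c < c + ε)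
      obtain ⟨q, rfl, hq1, hq2, hq3⟩ := hxS
      have hqc : c ≤ (q:ℝ) := csInf_le hbdd ⟨q, rfl, hq1, hq2, hq3⟩
      by_cases hic : c - ε < (i:ℝ)
      · exact ⟨q, i, by linarith, hxlt, hic, by linarith, hq3⟩
      · push_neg at hic
        obtain ⟨q', hq'1, hq'2⟩ := exists_rat_btwn (by linarith : c - ε < c)
        have hq'i : i < q' := by
          have : (i:ℝ) < (q':ℝ) := lt_of_le_of_lt hic hq'1
          exact_mod_cast this
        have hq'j : q' ≤ j := by
          have : (q':ℝ) ≤ (j:ℝ) := le_trans (le_of_lt hq'2) hcj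
          exact_mod_cast this
        have hq'F : F q' ↔ F i := by
          by_contra hq'F
          have : c ≤ (q':ℝ) := csInf_le hbdd ⟨q', rfl, le_of_lt hq'i, hq'j, hq'F⟩
          linarith
        refine ⟨q, q', by linarith, hxlt, hq'1, by linarith, ?_⟩
        intro h
        exact hq3 (h.trans hq'F)
    obtain ⟨h1, h2⟩ := hs c hcut
    have hji : (j:ℝ) ≤ c := h2.mp (by exact_mod_cast hci)
    have hcieq : c ≤ (i:ℝ) := h1.mpr hcj
    have : (i:ℝ) = (j:ℝ) := le_antisymm (by exact_mod_cast hij.le) (by linarith)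
    have : i = j := by exact_mod_cast this
    exact absurd this (ne_of_lt hij)
  intro i j hs
  rcases lt_trichotomy i j with h | h | h
  · by_contra hne; exact key i j h hs hne
  · rw [h]
  · by_contra hne; exact key j i h (simRel_symm hs) (fun hh => hne hh.symm)

lemma exists_finset_of_card_bound {U : Set ℝ} {n : ℕ}
    (h : ∀ s : Finset ℝ, ↑s ⊆ U → s.card ≤ n) : ∃ C : Finset ℝ, C.card ≤ n ∧ U ⊆ ↑C := by
  have hfin : U.Finite := by
    by_contra hinf
    obtain ⟨t, hts, htc⟩ := Set.Infinite.exists_subset_card_eq hinf (n+1)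
    have := h t hts; omega
  refine ⟨hfin.toFinset, ?_, by simp⟩
  exact h hfin.toFinset (by simp)

/-- an order embedding of `ℚ` into the rational interval `(u, v)`. -/
def emb (u v : ℚ) (x : ℚ) : ℚ := u + (v - u) * ((1 + x / (1 + |x|)) / 2)

lemma emb_core_bounds (x : ℚ) : 0 < (1 + x / (1 + |x|)) / 2 ∧ (1 + x / (1 + |x|)) / 2 < 1 := by
  have hx : (0:ℚ) < 1 + |x| := by positivity
  have h2 : x < 1 + |x| := by nlinarith [le_abs_self x, abs_nonneg x]
  have l1 : (-1:ℚ) < x / (1 + |x|) := by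
    rw [lt_div_iff₀ hx]
    nlinarith [neg_abs_le x, abs_nonneg x]
  have l2 : x / (1 + |x|) < 1 := (div_lt_one hx).mpr h2
  constructor <;> linarith

lemma emb_mono {u v : ℚ} (h : u < v) : StrictMono (emb u v) := by
  intro x y hxy
  have habs : x * |y| ≤ y * |x| := by
    rcases abs_cases x with ⟨h1, h2⟩ | ⟨h1, h2⟩ <;> rcases abs_cases y with ⟨h3, h4⟩ | ⟨h3, h4⟩ <;>
      rw [h1, h3] <;> nlinarith
  have hx : (0:ℚ) < 1 + |x| := by positivity
  have hy : (0:ℚ) < 1 + |y| := by positivity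
  have hcore : x / (1 + |x|) < y / (1 + |y|) := by
    rw [div_lt_div_iff₀ hx hy]
    nlinarith [habs]
  unfold emb
  nlinarith [hcore]

lemma emb_mem {u v : ℚ} (h : u < v) (x : ℚ) : u < emb u v x ∧ emb u v x < v := by
  obtain ⟨h1, h2⟩ := emb_core_bounds x
  unfold emb
  constructor <;> nlinarith

/-- the squeezing map towards the `t`-th cut. -/
def htf (u1 u2 v2 v3 md tq : ℚ) (i : ℚ) : ℚ :=
  if i < tq then emb u1 u2 i else if i = tq then md else emb v2 v3 i

section Htf
variable {u1 u2 v2 v3 md tq : ℚ}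

lemma htf_of_lt {i : ℚ} (h : i < tq) : htf u1 u2 v2 v3 md tq i = emb u1 u2 i := if_pos h

lemma htf_of_eq : htf u1 u2 v2 v3 md tq tq = md := by
  rw [htf, if_neg (lt_irrefl tq), if_pos rfl]

lemma htf_of_gt {i : ℚ} (h : tq < i) : htf u1 u2 v2 v3 md tq i = emb v2 v3 i := by
  rw [htf, if_neg (by linarith), if_neg (by linarith)]

lemma htf_mono (h12 : u1 < u2) (h23 : v2 < v3) (hum : u2 < md) (hmv : md < v2) :
    StrictMono (htf u1 u2 v2 v3 md tq) := by
  have hu2m : ∀ x, emb u1 u2 x < md := fun x => lt_trans (emb_mem h12 x).2 hum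
  have hmv2 : ∀ x, md < emb v2 v3 x := fun x => lt_trans hmv (emb_mem h23 x).1
  intro x y hxy
  rcases lt_trichotomy x tq with hx | hx | hx
  · rw [htf_of_lt hx]
    rcases lt_trichotomy y tq with hy | hy | hy
    · rw [htf_of_lt hy]; exact emb_mono h12 hxy
    · rw [hy, htf_of_eq]; exact hu2m x
    · rw [htf_of_gt hy]; exact lt_trans (hu2m x) (hmv2 y)
  · rw [hx] at hxy
    rw [hx, htf_of_eq, htf_of_gt hxy]
    exact hmv2 y
  · rw [htf_of_gt hx, htf_of_gt (lt_trans hx hxy)]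
    exact emb_mono h23 hxy

end Htf

/-- xor of two formulas. -/
def xorF {γ : Type*} (φ ψ : L.Formula γ) : L.Formula γ := (φ ⊓ ψ.not) ⊔ (φ.not ⊓ ψ)

lemma realize_xorF {M : Type*} [L.Structure M] {γ : Type*} (φ ψ : L.Formula γ) (v : γ → M) :
    (xorF φ ψ).Realize v ↔ Xor' (φ.Realize v) (ψ.Realize v) := by
  simp only [xorF, Xor', Xor, Formula.realize_sup, Formula.realize_inf, Formula.realize_not]
  tauto

def bXor : ∀ {m : ℕ}, (Fin m → Prop) → Prop
  | 0, _ => False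
  | _+1, P => Xor' (P 0) (bXor (P ∘ Fin.succ))

def bigXorF {γ : Type*} : ∀ {m : ℕ}, (Fin m → L.Formula γ) → L.Formula γ
  | 0, _ => ⊥
  | _+1, f => xorF (f 0) (bigXorF (f ∘ Fin.succ))

lemma realize_bigXorF {M : Type*} [L.Structure M] {γ : Type*} :
    ∀ {m : ℕ} (f : Fin m → L.Formula γ) (v : γ → M),
      (bigXorF f).Realize v ↔ bXor (fun t => (f t).Realize v)
  | 0, f, v => by simp [bigXorF, bXor, Formula.Realize]
  | m+1, f, v => by
    simp only [bigXorF, bXor, realize_xorF]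
    rw [realize_bigXorF (f ∘ Fin.succ) v]
    rfl

lemma bXor_congr : ∀ {m : ℕ} {P Q : Fin m → Prop}, (∀ t, P t ↔ Q t) → (bXor P ↔ bXor Q)
  | 0, _, _, _ => Iff.rfl
  | m+1, P, Q, h => by
    simp only [bXor]
    have := bXor_congr (fun t : Fin m => h t.succ)
    unfold Xor' Xor
    rw [h 0]
    tauto

lemma bXor_flip : ∀ {m : ℕ} (P Q : Fin m → Prop) (t : Fin m),
    (∀ s, s ≠ t → (P s ↔ Q s)) → ¬(P t ↔ Q t) → ¬(bXor P ↔ bXor Q)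
  | 0, _, _, t, _, _ => t.elim0
  | m+1, P, Q, t, h, ht => by
    induction t using Fin.cases with
    | zero =>
      have htail : bXor (P ∘ Fin.succ) ↔ bXor (Q ∘ Fin.succ) :=
        bXor_congr (fun s => h s.succ (Fin.succ_ne_zero s))
      simp only [bXor]
      unfold Xor' Xor
      tauto
    | succ t' =>
      have h0 : P 0 ↔ Q 0 := h 0 (Fin.succ_ne_zero t').symm
      have htail := bXor_flip (P ∘ Fin.succ) (Q ∘ Fin.succ) t'
        (fun s hs => h s.succ (fun hc => hs (Fin.succ_injective _ hc))) ht
      simp only [bXor]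
      unfold Xor' Xor
      tauto

lemma indisc_comp {M : Type*} [L.Structure M] {γ : Type*} {m : ℕ} (b : ℚ → γ → M)
    (hb : IsIndiscernible L b) (H : Fin m → ℚ → ℚ) (hmono : ∀ t, StrictMono (H t))
    (hsep : ∀ t t' : Fin m, t < t' → ∀ i j : ℚ, H t i < H t' j) :
    IsIndiscernible L (fun i (tv : Fin m × γ) => b (H tv.1 i) tv.2) := by
  intro k ψ i j hi hj
  have hE : ∀ (i : Fin k → ℚ), StrictMono i → StrictMono
      (fun u : Fin (m * k) => H (finProdFinEquiv.symm u).1 (i (finProdFinEquiv.symm u).2)) := by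
    intro i hi u u' hu
    dsimp only
    have hcoe : ∀ q : Fin m × Fin k, (finProdFinEquiv q : ℕ) = (q.2:ℕ) + (q.1:ℕ) * k := by
      intro q; simp [finProdFinEquiv]; ring
    set p := finProdFinEquiv.symm u with hp
    set p' := finProdFinEquiv.symm u' with hp'
    have hval : (p.2:ℕ) + (p.1:ℕ) * k < (p'.2:ℕ) + (p'.1:ℕ) * k := by
      have h1 : finProdFinEquiv p = u := finProdFinEquiv.apply_symm_apply u
      have h2 : finProdFinEquiv p' = u' := finProdFinEquiv.apply_symm_apply u'
      have h3 : (finProdFinEquiv p : ℕ) < (finProdFinEquiv p' : ℕ) := by rw [h1, h2]; exact hu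
      rw [hcoe, hcoe] at h3
      exact h3
    have hlex : p.1 < p'.1 ∨ (p.1 = p'.1 ∧ p.2 < p'.2) := by
      have hk2 : (p.2:ℕ) < k := p.2.isLt
      have hk2' : (p'.2:ℕ) < k := p'.2.isLt
      rcases lt_trichotomy ((p.1:ℕ)) ((p'.1:ℕ)) with h | h | h
      · left; exact h
      · right
        refine ⟨Fin.ext h, ?_⟩
        have he : (p.1:ℕ) * k = (p'.1:ℕ) * k := by rw [h]
        have : (p.2:ℕ) < (p'.2:ℕ) := by omega
        exact this
      · exfalso
        have h1 : (p'.1:ℕ) + 1 ≤ (p.1:ℕ) := h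
        nlinarith
    rcases hlex with h | ⟨h1, h2⟩
    · exact hsep _ _ h _ _
    · rw [h1]; exact (hmono p'.1) (hi h2)
  have key := hb (m * k)
    (ψ.relabel (fun w : Fin k × (Fin m × γ) => (finProdFinEquiv (w.2.1, w.1), w.2.2)))
    _ _ (hE i hi) (hE j hj)
  rw [Formula.realize_relabel, Formula.realize_relabel] at key
  convert key using 2 <;>
  · funext w
    simp only [Function.comp]
    congr 1
    simp

set_option maxHeartbeats 1000000 in
/-- Key construction: there cannot be `n+1` distinct cut points across all formulas. -/
lemma no_big_cut_family {M : Type*} [L.Structure M] {α : Type*} {γ : Type}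
    {p : Set (L.Formula α)} {n : ℕ}
    (hloc : ∀ (β : Type) (φ : L.Formula (α ⊕ β)), LocalDpRankLE M φ p n)
    (a : α → M) (ha : RealizesType p a) (b : ℚ → γ → M) (hb : IsIndiscernible L b)
    (c : Fin (n+1) → ℝ) (hc : StrictMono c)
    (ψs : Fin (n+1) → L.Formula (γ ⊕ α))
    (hcut : ∀ t, c t ∈ CutsP (fun i => (ψs t).Realize (Sum.elim (b i) a)))
    (D : Fin (n+1) → Finset ℝ)
    (hcap : ∀ t, Captures ↑(D t) (fun i => (ψs t).Realize (Sum.elim (b i) a))) : False := by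
  classical
  obtain ⟨ε1, hε1, hε1le⟩ := exists_pos_le_finset
    (Finset.univ.biUnion (fun t => ((D t).filter (fun x => x ≠ c t)).image
        (fun x => |x - c t|))) (by
      intro x hx
      simp only [Finset.mem_biUnion, Finset.mem_image, Finset.mem_filter,
        Finset.mem_univ, true_and] at hx
      obtain ⟨t, ⟨y, ⟨hy, hyne⟩, rfl⟩⟩ := hx
      exact abs_pos.mpr (sub_ne_zero.mpr hyne))
  obtain ⟨ε2, hε2, hε2le⟩ := exists_pos_le_finset
    ((Finset.univ.filter (fun q : Fin (n+1) × Fin (n+1) => q.1 < q.2)).image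
        (fun q => (c q.2 - c q.1)/3)) (by
      intro x hx
      simp only [Finset.mem_image, Finset.mem_filter, Finset.mem_univ, true_and] at hx
      obtain ⟨q, hq, rfl⟩ := hx
      have := hc hq; linarith)
  set ε := min ε1 ε2 with hεdef
  have hε : 0 < ε := lt_min hε1 hε2
  have hεD : ∀ t, ∀ x ∈ D t, |x - c t| < ε → x = c t := by
    intro t x hx hlt
    by_contra hne
    have h1 : ε1 ≤ |x - c t| := hε1le _ (Finset.mem_biUnion.mpr
      ⟨t, Finset.mem_univ t, Finset.mem_image_of_mem _ (Finset.mem_filter.mpr ⟨hx, hne⟩)⟩)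
    have h2 : ε ≤ ε1 := min_le_left _ _
    linarith
  have hεsep : ∀ t t' : Fin (n+1), t < t' → c t + ε < c t' - ε := by
    intro t t' htt
    have hmem : ((t, t') : Fin (n+1) × Fin (n+1)) ∈ Finset.univ.filter
        (fun q : Fin (n+1) × Fin (n+1) => q.1 < q.2) :=
      Finset.mem_filter.mpr ⟨Finset.mem_univ _, htt⟩
    have h3 : ε2 ≤ (c t' - c t)/3 := hε2le _ (Finset.mem_image_of_mem _ hmem)
    have h2 : ε ≤ ε2 := min_le_right _ _
    have := hc htt
    linarith
  -- rationals around each cut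
  have hleft : ∀ t, ∃ uu : ℚ × ℚ, c t - ε < (uu.1:ℝ) ∧ uu.1 < uu.2 ∧ (uu.2:ℝ) < c t := by
    intro t
    obtain ⟨w2, h1, h2⟩ := exists_rat_btwn (show c t - ε/2 < c t by linarith)
    obtain ⟨w1, h3, h4⟩ := exists_rat_btwn (show c t - ε < (w2:ℝ) by linarith)
    exact ⟨(w1, w2), h3, by exact_mod_cast h4, h2⟩
  have hright : ∀ t, ∃ vv : ℚ × ℚ × ℚ, c t < (vv.1:ℝ) ∧ vv.1 < vv.2.1 ∧ vv.2.1 < vv.2.2 ∧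
      (vv.2.2:ℝ) < c t + ε := by
    intro t
    obtain ⟨w3, h1, h2⟩ := exists_rat_btwn (show c t < c t + ε by linarith)
    obtain ⟨w2, h3, h4⟩ := exists_rat_btwn h1
    obtain ⟨w1, h5, h6⟩ := exists_rat_btwn h3
    exact ⟨(w1, w2, w3), h5, by exact_mod_cast h6, by exact_mod_cast h4, h2⟩
  choose uu huL huM huR using hleft
  choose vv hvL hv12 hv23 hvR using hright
  -- midpoints
  have hmidex : ∀ t, ∃ md : ℚ, c t ≤ (md:ℝ) ∧ (md:ℝ) < (vv t).2.1 ∧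
      (∀ q : ℚ, (q:ℝ) = c t → (md:ℝ) = c t) := by
    intro t
    by_cases h : ∃ q : ℚ, (q:ℝ) = c t
    · obtain ⟨q, hq⟩ := h
      refine ⟨q, le_of_eq hq.symm, ?_, fun _ _ => hq⟩
      rw [hq]
      calc c t < ((vv t).1 : ℝ) := hvL t
        _ < _ := by exact_mod_cast hv12 t
    · exact ⟨(vv t).1, le_of_lt (hvL t), by exact_mod_cast hv12 t,
        fun q hq => absurd ⟨q, hq⟩ h⟩
  choose mid hmid1 hmid2 hmid3 using hmidex
  -- the squeezing maps
  set H : Fin (n+1) → ℚ → ℚ :=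
    fun t => htf (uu t).1 (uu t).2 (vv t).2.1 (vv t).2.2 (mid t) ((t:ℕ):ℚ) with hH
  have hu2mid : ∀ t, (uu t).2 < mid t := by
    intro t
    have : ((uu t).2 : ℝ) < (mid t : ℝ) := lt_of_lt_of_le (huR t) (hmid1 t)
    exact_mod_cast this
  have hmidv2 : ∀ t, mid t < (vv t).2.1 := by
    intro t
    have := hmid2 t
    exact_mod_cast this
  have hHmono : ∀ t, StrictMono (H t) :=
    fun t => htf_mono (huM t) (hv23 t) (hu2mid t) (hmidv2 t)
  -- ranges
  have hbnd : ∀ t i, c t - ε < (H t i : ℝ) ∧ (H t i : ℝ) < c t + ε := by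
    intro t i
    rcases lt_trichotomy i ((t:ℕ):ℚ) with h | h | h
    · simp only [hH]
      rw [htf_of_lt h]
      obtain ⟨e1, e2⟩ := emb_mem (huM t) i
      constructor
      · calc c t - ε < ((uu t).1:ℝ) := huL t
          _ < _ := by exact_mod_cast e1
      · calc (emb (uu t).1 (uu t).2 i : ℝ) < ((uu t).2:ℝ) := by exact_mod_cast e2
          _ < c t := huR t
          _ < c t + ε := by linarith
    · simp only [hH]
      rw [h, htf_of_eq]
      constructor
      · calc c t - ε < c t := by linarith
          _ ≤ _ := hmid1 t
      · calc (mid t : ℝ) < ((vv t).2.1:ℝ) := hmid2 t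
          _ < ((vv t).2.2:ℝ) := by exact_mod_cast hv23 t
          _ < c t + ε := hvR t
    · simp only [hH]
      rw [htf_of_gt h]
      obtain ⟨e1, e2⟩ := emb_mem (hv23 t) i
      constructor
      · calc c t - ε < c t := by linarith
          _ < ((vv t).1:ℝ) := hvL t
          _ < ((vv t).2.1:ℝ) := by exact_mod_cast hv12 t
          _ < _ := by exact_mod_cast e1
      · calc (emb (vv t).2.1 (vv t).2.2 i : ℝ) < ((vv t).2.2:ℝ) := by exact_mod_cast e2
          _ < c t + ε := hvR t
    -- side info
  have hsideL : ∀ (t : Fin (n+1)) (i : ℚ), i < ((t:ℕ):ℚ) → (H t i : ℝ) < c t := by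
    intro t i h
    simp only [hH]
    rw [htf_of_lt h]
    calc (emb (uu t).1 (uu t).2 i : ℝ) < ((uu t).2:ℝ) := by exact_mod_cast (emb_mem (huM t) i).2
      _ < c t := huR t
  have hsideR : ∀ (t : Fin (n+1)) (i : ℚ), ((t:ℕ):ℚ) < i → c t < (H t i : ℝ) := by
    intro t i h
    simp only [hH]
    rw [htf_of_gt h]
    calc c t < ((vv t).1:ℝ) := hvL t
      _ < ((vv t).2.1:ℝ) := by exact_mod_cast hv12 t
      _ < _ := by exact_mod_cast (emb_mem (hv23 t) i).1
  -- similarity within the t-th neighbourhood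
  have hsim2 : ∀ (t : Fin (n+1)) (x y : ℚ), (c t - ε < x) → ((x:ℝ) < c t + ε) → (c t - ε < y) →
      ((y:ℝ) < c t + ε) →
      (((x:ℝ) < c t ∧ (y:ℝ) < c t) ∨ ((x:ℝ) = c t ∧ (y:ℝ) = c t) ∨
        (c t < (x:ℝ) ∧ c t < (y:ℝ))) → SimRel ↑(D t) x y := by
    intro t x y hx1 hx2 hy1 hy2 hcase z hz
    by_cases hzc : z = c t
    · subst hzc
      rcases hcase with ⟨e1, e2⟩ | ⟨e1, e2⟩ | ⟨e1, e2⟩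
      · constructor
        · constructor <;> intro h <;> linarith
        · constructor <;> intro h <;> linarith
      · rw [e1, e2]; exact ⟨Iff.rfl, Iff.rfl⟩
      · constructor
        · constructor <;> intro h <;> linarith
        · constructor <;> intro h <;> linarith
    · have : ¬ |z - c t| < ε := fun hlt => hzc (hεD t z hz hlt)
      push_neg at this
      rcases le_abs.mp this with hd | hd
      · constructor
        · constructor <;> intro h <;> linarith
        · constructor <;> intro h <;> linarith
      · constructor
        · constructor <;> intro h <;> linarith
        · constructor <;> intro h <;> linarith
  -- G values
  set G : Fin (n+1) → ℚ → Prop := fun t i => (ψs t).Realize (Sum.elim (b (H t i)) a) with hG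
  have hsame : ∀ (t : Fin (n+1)) (i j : ℚ), (i < ((t:ℕ):ℚ) ↔ j < ((t:ℕ):ℚ)) →
      (i = ((t:ℕ):ℚ) ↔ j = ((t:ℕ):ℚ)) → (G t i ↔ G t j) := by
    intro t i j hlt heq
    apply hcap t
    rcases lt_trichotomy i ((t:ℕ):ℚ) with h | h | h
    · exact hsim2 t _ _ (hbnd t i).1 (hbnd t i).2 (hbnd t j).1 (hbnd t j).2
        (Or.inl ⟨hsideL t i h, hsideL t j (hlt.mp h)⟩)
    · rw [h, (heq.mp h)]
      intro z hz; exact ⟨Iff.rfl, Iff.rfl⟩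
    · have hj : ((t:ℕ):ℚ) < j := by
        rcases lt_trichotomy j ((t:ℕ):ℚ) with h' | h' | h'
        · exact absurd (hlt.mpr h') (by linarith)
        · exact absurd (heq.mpr h') (by linarith)
        · exact h'
      exact hsim2 t _ _ (hbnd t i).1 (hbnd t i).2 (hbnd t j).1 (hbnd t j).2
        (Or.inr (Or.inr ⟨hsideR t i h, hsideR t j hj⟩))
  -- reaching values near the t-th cut
  have hreach : ∀ (t : Fin (n+1)) (q0 : ℚ), c t - ε < (q0:ℝ) → (q0:ℝ) < c t + ε → ∀ ε' : ℝ, 0 < ε' →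
      ∃ i : ℚ, ((t:ℕ):ℝ) - ε' < (i:ℝ) ∧ (i:ℝ) < ((t:ℕ):ℝ) + ε' ∧
        (G t i ↔ (ψs t).Realize (Sum.elim (b q0) a)) := by
    intro t q0 hq1 hq2 ε' hε'
    rcases lt_trichotomy ((q0:ℝ)) (c t) with h | h | h
    · obtain ⟨i, hi1, hi2⟩ := exists_rat_btwn (show ((t:ℕ):ℝ) - ε' < ((t:ℕ):ℝ) by linarith)
      have hiq : i < ((t:ℕ):ℚ) := by exact_mod_cast hi2
      refine ⟨i, hi1, by linarith, ?_⟩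
      apply hcap t
      exact hsim2 t _ _ (hbnd t i).1 (hbnd t i).2 hq1 hq2 (Or.inl ⟨hsideL t i hiq, h⟩)
    · have hmq : (mid t : ℝ) = c t := hmid3 t q0 h
      have : mid t = q0 := by
        have : (mid t : ℝ) = (q0 : ℝ) := by rw [hmq, h]
        exact_mod_cast this
      refine ⟨((t:ℕ):ℚ), by push_cast; linarith, by push_cast; linarith, ?_⟩
      simp only [hG, hH]
      rw [htf_of_eq, this]
    · obtain ⟨i, hi1, hi2⟩ := exists_rat_btwn (show ((t:ℕ):ℝ) < ((t:ℕ):ℝ) + ε' by linarith)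
      have hiq : ((t:ℕ):ℚ) < i := by exact_mod_cast hi1
      refine ⟨i, by linarith, hi2, ?_⟩
      apply hcap t
      exact hsim2 t _ _ (hbnd t i).1 (hbnd t i).2 hq1 hq2
        (Or.inr (Or.inr ⟨hsideR t i hiq, h⟩))
  -- the combined sequence
  set b' : ℚ → (Fin (n+1) × γ) → M := fun i tv => b (H tv.1 i) tv.2 with hb'def
  have hsep' : ∀ t t' : Fin (n+1), t < t' → ∀ i j : ℚ, H t i < H t' j := by
    intro t t' htt i j
    have h1 := (hbnd t i).2
    have h2 := (hbnd t' j).1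
    have h3 := hεsep t t' htt
    have : (H t i : ℝ) < (H t' j : ℝ) := by linarith
    exact_mod_cast this
  have hb' : IsIndiscernible L b' := indisc_comp b hb H hHmono hsep'
  -- the combined formula
  set Φ : L.Formula (α ⊕ (Fin (n+1) × γ)) := bigXorF (fun t => (ψs t).relabel
    (Sum.elim (fun v : γ => Sum.inr (t, v)) Sum.inl)) with hΦ
  have hHH : ∀ i : ℚ, (Φ.Realize (Sum.elim a (b' i)) ↔ bXor (fun t => G t i)) := by
    intro i
    rw [hΦ, realize_bigXorF]
    apply bXor_congr
    intro t
    rw [Formula.realize_relabel]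
    have he : (Sum.elim a (b' i)) ∘ (Sum.elim (fun v : γ => Sum.inr (t, v)) Sum.inl)
        = Sum.elim (b (H t i)) a := by
      funext x; cases x <;> rfl
    rw [he]
  obtain ⟨C', hC'card, hC'cap⟩ := hloc (Fin (n+1) × γ) Φ a ha b' hb'
  have hcapHH : Captures ↑C' (fun i => bXor (fun t => G t i)) := by
    intro i j hs
    exact ((hHH i).symm.trans (hC'cap i j hs)).trans (hHH j)
  have hcuts : ∀ t : Fin (n+1), ((t:ℕ):ℝ) ∈ CutsP (fun i => bXor (fun s => G s i)) := by
    intro t ε' hε'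
    have hε'' : (0:ℝ) < min ε' 1 := lt_min hε' one_pos
    obtain ⟨q, q', hq1, hq2, hq3, hq4, hqne⟩ := hcut t ε hε
    obtain ⟨i, hi1, hi2, hiG⟩ := hreach t q hq1 hq2 (min ε' 1) hε''
    obtain ⟨j, hj1, hj2, hjG⟩ := hreach t q' hq3 hq4 (min ε' 1) hε''
    have hm1 : min ε' 1 ≤ ε' := min_le_left _ _
    have hm2 : min ε' 1 ≤ 1 := min_le_right _ _
    refine ⟨i, j, by linarith, by linarith, by linarith, by linarith, ?_⟩
    apply bXor_flip (fun s => G s i) (fun s => G s j) t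
    · intro s hs
      apply hsame s i j
      · rcases lt_or_gt_of_ne hs with hst | hst
        · have hnat : ((s:ℕ):ℝ) + 1 ≤ ((t:ℕ):ℝ) := by
            have : (s:ℕ) + 1 ≤ (t:ℕ) := hst
            exact_mod_cast this
          have hsi : ((s:ℕ):ℚ) < i := by
            have : ((s:ℕ):ℝ) < (i:ℝ) := by push_cast; push_cast at hnat; linarith
            exact_mod_cast this
          have hsj : ((s:ℕ):ℚ) < j := by
            have : ((s:ℕ):ℝ) < (j:ℝ) := by push_cast; push_cast at hnat; linarith
            exact_mod_cast this
          constructor <;> intro h <;> linarith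
        · have hnat : ((t:ℕ):ℝ) + 1 ≤ ((s:ℕ):ℝ) := by
            have : (t:ℕ) + 1 ≤ (s:ℕ) := hst
            exact_mod_cast this
          have hsi : i < ((s:ℕ):ℚ) := by
            have : (i:ℝ) < ((s:ℕ):ℝ) := by push_cast; push_cast at hnat; linarith
            exact_mod_cast this
          have hsj : j < ((s:ℕ):ℚ) := by
            have : (j:ℝ) < ((s:ℕ):ℝ) := by push_cast; push_cast at hnat; linarith
            exact_mod_cast this
          constructor <;> intro h <;> linarith
      · rcases lt_or_gt_of_ne hs with hst | hst
        · have hnat : ((s:ℕ):ℝ) + 1 ≤ ((t:ℕ):ℝ) := by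
            have : (s:ℕ) + 1 ≤ (t:ℕ) := hst
            exact_mod_cast this
          have hsi : ((s:ℕ):ℚ) < i := by
            have : ((s:ℕ):ℝ) < (i:ℝ) := by push_cast; push_cast at hnat; linarith
            exact_mod_cast this
          have hsj : ((s:ℕ):ℚ) < j := by
            have : ((s:ℕ):ℝ) < (j:ℝ) := by push_cast; push_cast at hnat; linarith
            exact_mod_cast this
          constructor <;> intro h <;> linarith
        · have hnat : ((t:ℕ):ℝ) + 1 ≤ ((s:ℕ):ℝ) := by
            have : (t:ℕ) + 1 ≤ (s:ℕ) := hst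
            exact_mod_cast this
          have hsi : i < ((s:ℕ):ℚ) := by
            have : (i:ℝ) < ((s:ℕ):ℝ) := by push_cast; push_cast at hnat; linarith
            exact_mod_cast this
          have hsj : j < ((s:ℕ):ℚ) := by
            have : (j:ℝ) < ((s:ℕ):ℝ) := by push_cast; push_cast at hnat; linarith
            exact_mod_cast this
          constructor <;> intro h <;> linarith
    · intro h
      exact hqne ((hiG.symm.trans h).trans hjG)
  have hsub := cutsP_subset_of_captures C' hcapHH
  have hinj : Function.Injective (fun t : Fin (n+1) => ((t:ℕ):ℝ)) := by
    intro s t h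
    have : ((s:ℕ):ℝ) = ((t:ℕ):ℝ) := h
    exact Fin.ext (by exact_mod_cast this)
  have hss : Finset.univ.image (fun t : Fin (n+1) => ((t:ℕ):ℝ)) ⊆ C' := by
    intro x hx
    simp only [Finset.mem_image, Finset.mem_univ, true_and] at hx
    obtain ⟨t, rfl⟩ := hx
    exact hsub (hcuts t)
  have hcard := Finset.card_le_card hss
  rw [Finset.card_image_of_injective _ hinj, Finset.card_univ, Fintype.card_fin] at hcard
  omega

end Aux

/-- Proposition 2.3: a partial type `p(x)` has dp-rank `≤ n` if and only if every
formula `φ(x;y)` has local dp-rank `≤ n` with respect to `p`. -/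
theorem dpRank_le_iff_local_dpRank_le (M : Type*) [L.Structure M] {α : Type*}
    (p : Set (L.Formula α)) (n : ℕ) :
    DpRankLE M p n ↔
      ∀ (β : Type) (φ : L.Formula (α ⊕ β)), LocalDpRankLE M φ p n := by
  constructor
  · intro hD β φ a ha b hb
    obtain ⟨C, h1, h2⟩ := hD a ha β b hb
    refine ⟨C, h1, fun i j hs => ?_⟩
    have key := h2 i j hs (φ.relabel Sum.swap)
    rw [Formula.realize_relabel, Formula.realize_relabel] at key
    have e : ∀ k : ℚ, (Sum.elim (b k) a) ∘ Sum.swap = Sum.elim a (b k) := by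
      intro k; funext x; cases x <;> rfl
    rw [e i, e j] at key
    exact key
  · intro hloc a ha γ b hb
    have hψ : ∀ ψ : L.Formula (γ ⊕ α), ∃ C : Finset ℝ, C.card ≤ n ∧
        Captures ↑C (fun i => ψ.Realize (Sum.elim (b i) a)) := by
      intro ψ
      obtain ⟨C, h1, h2⟩ := hloc γ (ψ.relabel Sum.swap) a ha b hb
      refine ⟨C, h1, fun i j hs => ?_⟩
      have key := h2 i j hs
      rw [Formula.realize_relabel, Formula.realize_relabel] at key
      have e : ∀ k : ℚ, (Sum.elim a (b k)) ∘ Sum.swap = Sum.elim (b k) a := by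
        intro k; funext x; cases x <;> rfl
      rw [e i, e j] at key
      exact key
    choose D hDcard hDcap using hψ
    have hbound : ∀ s : Finset ℝ,
        ↑s ⊆ (⋃ ψ : L.Formula (γ ⊕ α), CutsP (fun i => ψ.Realize (Sum.elim (b i) a))) →
        s.card ≤ n := by
      intro s hs
      by_contra hlt
      push_neg at hlt
      obtain ⟨s', hs's, hs'c⟩ := Finset.exists_subset_card_eq (by omega : n + 1 ≤ s.card)
      have hmem : ∀ t : Fin (n+1), ((s'.orderIsoOfFin hs'c t : ℝ)) ∈
          (⋃ ψ : L.Formula (γ ⊕ α), CutsP (fun i => ψ.Realize (Sum.elim (b i) a))) := by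
        intro t
        exact hs (hs's (s'.orderIsoOfFin hs'c t).2)
      have hmem' : ∀ t : Fin (n+1), ∃ ψ : L.Formula (γ ⊕ α),
          ((s'.orderIsoOfFin hs'c t : ℝ)) ∈ CutsP (fun i => ψ.Realize (Sum.elim (b i) a)) := by
        intro t
        exact Set.mem_iUnion.mp (hmem t)
      choose ψt hψt using hmem'
      exact no_big_cut_family hloc a ha b hb
        (fun t => (s'.orderIsoOfFin hs'c t : ℝ))
        (fun x y hxy => (s'.orderIsoOfFin hs'c).strictMono hxy)
        ψt hψt (fun t => D (ψt t)) (fun t => hDcap (ψt t))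
    obtain ⟨C, hCcard, hUC⟩ := exists_finset_of_card_bound hbound
    refine ⟨C, hCcard, fun i j hs ψ => ?_⟩
    have : Captures ↑C (fun i => ψ.Realize (Sum.elim (b i) a)) :=
      captures_mono (le_trans (Set.subset_iUnion
        (fun ψ : L.Formula (γ ⊕ α) => CutsP (fun i => ψ.Realize (Sum.elim (b i) a))) ψ) hUC)
        (captures_cutsP _)
    exact this i j hs


end VCPaper
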